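/- Let S = ℝ[x] (realized as AddMonoidAlgebra ℝ ℕ) be graded by D = ℤ/2ℤ via the parity of the exponent, so S = S_0̄ ⊕ S_1̄ where S_ī is spanned by the monomials x^m with m ≡ i (mod 2). Then the principal ideal 𝔭 = (x² − 1) is a homogeneous ideal which is D-prime (for all homogeneous f, g ∈ S with fg ∈ 𝔭, either f ∈ 𝔭 or g ∈ 𝔭), but 𝔭 is not a prime ideal of S. -/

import Mathlib

open Polynomial

private lemma eval_hom_aux (f : AddMonoidAlgebra ℝ ℕ) (d : ZMod 2)
    (hf : ∀ m ∈ f.coeff.support, (m : ZMod 2) = d) :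
    Polynomial.eval (-1 : ℝ) ((Polynomial.toFinsuppIso ℝ).symm f) =
      (if d = 0 then 1 else -1) * Polynomial.eval (1 : ℝ) ((Polynomial.toFinsuppIso ℝ).symm f) := by
  have h1 : ∀ r : ℝ, Polynomial.eval r ((Polynomial.toFinsuppIso ℝ).symm f)
      = ∑ n ∈ f.coeff.support, f.coeff n * r ^ n := by
    intro r
    rw [Polynomial.toFinsuppIso_symm_apply, Polynomial.eval_eq_sum, Polynomial.sum_def]
    simp
  rw [h1, h1, Finset.mul_sum]
  refine Finset.sum_congr rfl fun n hn => ?_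
  have hd := hf n hn
  by_cases h : Even n
  · have h0 : (n : ZMod 2) = 0 := (ZMod.natCast_eq_zero_iff n 2).mpr h.two_dvd
    rw [← hd, h0]
    simp [h.neg_one_pow]
  · have hodd : Odd n := Nat.odd_iff.mpr (Nat.not_even_iff.mp h)
    have h1' : (n : ZMod 2) = 1 := by
      obtain ⟨k, hk⟩ := hodd
      subst hk
      push_cast
      rw [show (2 : ZMod 2) = 0 by decide]
      ring
    rw [← hd, h1']
    simp [hodd.neg_one_pow]

theorem stmt_2 :
    let 𝒜 := AddMonoidAlgebra.gradeBy ℝ (Nat.castAddMonoidHom (ZMod 2))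
    let x : AddMonoidAlgebra ℝ ℕ := AddMonoidAlgebra.single 1 1
    let 𝔭 : Ideal (AddMonoidAlgebra ℝ ℕ) := Ideal.span {x * x - 1}
    𝔭 ≠ ⊤ ∧ 𝔭.IsHomogeneous 𝒜 ∧
      (∀ f g : AddMonoidAlgebra ℝ ℕ, SetLike.IsHomogeneousElem 𝒜 f → SetLike.IsHomogeneousElem 𝒜 g →
        f * g ∈ 𝔭 → f ∈ 𝔭 ∨ g ∈ 𝔭) ∧
      ¬ 𝔭.IsPrime := by
  intro 𝒜 x 𝔭
  set e := (Polynomial.toFinsuppIso ℝ).symm with he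
  have hex : e x = X := by
    show (Polynomial.toFinsuppIso ℝ).symm (AddMonoidAlgebra.single 1 1) = X
    rw [Polynomial.toFinsuppIso_symm_apply, Polynomial.ofFinsupp_single,
      Polynomial.monomial_one_one_eq_X]
  have hp : e (x * x - 1) = X ^ 2 - 1 := by
    rw [map_sub, map_mul, hex, map_one]; ring
  have hmem : ∀ f : AddMonoidAlgebra ℝ ℕ, f ∈ 𝔭 ↔ (X ^ 2 - 1 : ℝ[X]) ∣ e f := by
    intro f
    rw [Ideal.mem_span_singleton, ← hp]
    constructor
    · exact fun h => map_dvd (e : AddMonoidAlgebra ℝ ℕ →+* ℝ[X]) h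
    · intro h
      have := map_dvd e.symm h
      simpa using this
  have hroot : ∀ f : AddMonoidAlgebra ℝ ℕ, SetLike.IsHomogeneousElem 𝒜 f →
      ((X - Polynomial.C (1:ℝ)) ∣ e f ↔ (X - Polynomial.C (-1:ℝ)) ∣ e f) := by
    rintro f ⟨d, hf⟩
    have hfd : ∀ m ∈ f.coeff.support, (m : ZMod 2) = d := by
      intro m hm
      have := (AddMonoidAlgebra.mem_gradeBy_iff (R := ℝ)
        (⇑(Nat.castAddMonoidHom (ZMod 2))) d f).mp hf hm
      simpa using this
    have hev := eval_hom_aux f d hfd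
    have hne : (if d = 0 then (1:ℝ) else -1) ≠ 0 := by split_ifs <;> norm_num
    rw [Polynomial.dvd_iff_isRoot, Polynomial.dvd_iff_isRoot, Polynomial.IsRoot.def,
      Polynomial.IsRoot.def]
    rw [he] at *
    constructor
    · intro h
      rw [hev, h, mul_zero]
    · intro h
      rw [h] at hev
      exact (mul_eq_zero.mp hev.symm).resolve_left hne
  have hfac : (X ^ 2 - 1 : ℝ[X]) = (X - Polynomial.C 1) * (X - Polynomial.C (-1)) := by
    rw [map_neg, map_one]; ring
  have hcop : IsCoprime (X - Polynomial.C (1:ℝ)) (X - Polynomial.C (-1:ℝ)) :=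
    Polynomial.isCoprime_X_sub_C_of_isUnit_sub (by norm_num)
  refine ⟨?_, ?_, ?_, ?_⟩
  · intro h
    have h1 : (1 : AddMonoidAlgebra ℝ ℕ) ∈ 𝔭 := h ▸ Submodule.mem_top
    rw [hmem, map_one] at h1
    obtain ⟨c, hc⟩ := h1
    have := congrArg (Polynomial.eval (1:ℝ)) hc
    simp at this
  · refine Ideal.homogeneous_span 𝒜 _ ?_
    rintro y rfl
    refine ⟨0, Submodule.sub_mem _ ?_ ?_⟩
    · have h2 : x * x = AddMonoidAlgebra.single 2 (1:ℝ) := by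
        show AddMonoidAlgebra.single (1:ℕ) (1:ℝ) * AddMonoidAlgebra.single 1 1 = _
        rw [AddMonoidAlgebra.single_mul_single]
        norm_num
      rw [h2]
      have := AddMonoidAlgebra.single_mem_gradeBy (R := ℝ) (Nat.castAddMonoidHom (ZMod 2)) 2 (1:ℝ)
      convert this using 2
      decide
    · have h0 : (1 : AddMonoidAlgebra ℝ ℕ) = AddMonoidAlgebra.single 0 (1:ℝ) := rfl
      rw [h0]
      have := AddMonoidAlgebra.single_mem_gradeBy (R := ℝ) (Nat.castAddMonoidHom (ZMod 2)) 0 (1:ℝ)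
      convert this using 2
      decide
  · intro f g hf hg hfg
    rw [hmem] at hfg
    rw [hmem f, hmem g]
    rw [map_mul, hfac] at hfg
    have hd1 : (X - Polynomial.C (1:ℝ)) ∣ e f * e g :=
      dvd_trans ⟨X - Polynomial.C (-1), rfl⟩ hfg
    rcases (Polynomial.prime_X_sub_C (1:ℝ)).2.2 _ _ hd1 with h | h
    · left
      rw [hfac]
      exact hcop.mul_dvd h ((hroot f hf).mp h)
    · right
      rw [hfac]
      exact hcop.mul_dvd h ((hroot g hg).mp h)
  · intro hP
    have hx1 : x * x - 1 ∈ 𝔭 := Ideal.subset_span rfl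
    have heq : (x - 1) * (x + 1) = x * x - 1 := by ring
    rcases hP.mem_or_mem (heq ▸ hx1) with h | h
    · rw [hmem, map_sub, hex, map_one] at h
      obtain ⟨c, hc⟩ := h
      have := congrArg (Polynomial.eval (-1:ℝ)) hc
      simp at this
      norm_num at this
    · rw [hmem, map_add, hex, map_one] at h
      obtain ⟨c, hc⟩ := h
      have := congrArg (Polynomial.eval (1:ℝ)) hc
      simp at this
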